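/- Every non-degenerate homomorphism φ: F_Y → F_X with Y finite decomposes as φ = φ' ∘ ψ_k ∘ ⋯ ∘ ψ_1, where each ψ_j is one of the elementary folding morphisms (identity with added restriction, edge-subdivision introducing a new generator, Nielsen transformation x ↦ xy or y ↦ yx, or generator identification), and φ' satisfies: for all distinct letters x ≠ y in the final generating set and its inverses, there is no cancellation in φ'(x)·φ'(y)⁻¹. -/

import Mathlib

/-- Reduced word length of a free group element. -/
def len {α : Type*} [DecidableEq α] (w : FreeGroup α) : ℕ := w.toWord.length

/-- The free group element corresponding to a single letter (generator or inverse). -/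
def lett {α : Type*} (p : α × Bool) : FreeGroup α := FreeGroup.mk [p]

/-- A free group element is cyclically reduced if its last letter is not the
inverse of its first letter. -/
def CyclicallyReduced {α : Type*} [DecidableEq α] (w : FreeGroup α) : Prop :=
  ∀ x ∈ w.toWord.head?, ∀ y ∈ w.toWord.getLast?, y ≠ (x.1, !x.2)

/-- `H` is a free factor of `K`: `K` is the internal free product of `H` with some `L ≤ K`. -/
def IsFreeFactorOf {G : Type*} [Group G] (H K : Subgroup G) : Prop :=
  H ≤ K ∧ ∃ L : Subgroup G, H ⊔ L = K ∧
    Function.Injective (Monoid.Coprod.lift H.subtype L.subtype)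

/-- `H ≤ K` is an algebraic extension: no proper free factor `J` of `K` with `H ≤ J < K`. -/
def IsAlgebraicExtension {G : Type*} [Group G] (H K : Subgroup G) : Prop :=
  H ≤ K ∧ ¬ ∃ J : Subgroup G, IsFreeFactorOf J K ∧ H ≤ J ∧ J < K

/-- The elementary folding morphisms between free groups: identity, a Nielsen
transformation `x ↦ xy`, an edge subdivision introducing a new generator (two
shapes, for `x ≠ y⁻¹` and for `x = y⁻¹`), and identification of two generators. -/
inductive IsFolding : ∀ {A B : Type}, (FreeGroup A →* FreeGroup B) → Prop where
  | ident {A : Type} : IsFolding (MonoidHom.id (FreeGroup A))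
  | nielsen {A : Type} (x y : A × Bool) (hxy : y.1 ≠ x.1)
      (ψ : FreeGroup A →* FreeGroup A)
      (hx : ψ (lett x) = lett x * lett y)
      (hz : ∀ z : A, z ≠ x.1 → ψ (FreeGroup.of z) = FreeGroup.of z) :
      IsFolding ψ
  | subdiv {A : Type} (x y : A × Bool) (hxy : y.1 ≠ x.1)
      (ψ : FreeGroup A →* FreeGroup (A ⊕ Unit))
      (hx : ψ (lett x) = lett (Sum.inl x.1, x.2) * FreeGroup.of (Sum.inr ()))
      (hy : ψ (lett y) = lett (Sum.inl y.1, y.2) * FreeGroup.of (Sum.inr ()))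
      (hz : ∀ z : A, z ≠ x.1 → z ≠ y.1 → ψ (FreeGroup.of z) = FreeGroup.of (Sum.inl z)) :
      IsFolding ψ
  | subdivInv {A : Type} (x : A × Bool)
      (ψ : FreeGroup A →* FreeGroup (A ⊕ Unit))
      (hx : ψ (lett x) = (FreeGroup.of (Sum.inr ()))⁻¹ *
        lett (Sum.inl x.1, x.2) * FreeGroup.of (Sum.inr ()))
      (hz : ∀ z : A, z ≠ x.1 → ψ (FreeGroup.of z) = FreeGroup.of (Sum.inl z)) :
      IsFolding ψ
  | identify {A : Type} (x y : A) (hxy : x ≠ y)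
      (ψ : FreeGroup A →* FreeGroup {z : A // z ≠ y})
      (hx : ψ (FreeGroup.of y) = FreeGroup.of ⟨x, hxy⟩)
      (hz : ∀ z : A, (h : z ≠ y) → ψ (FreeGroup.of z) = FreeGroup.of ⟨z, h⟩) :
      IsFolding ψ

/-- Finite compositions of elementary folding morphisms. -/
inductive IsFoldingSeq : ∀ {A B : Type}, (FreeGroup A →* FreeGroup B) → Prop where
  | refl {A : Type} : IsFoldingSeq (MonoidHom.id (FreeGroup A))
  | step {A B C : Type} (ψ : FreeGroup A →* FreeGroup B) (ρ : FreeGroup B →* FreeGroup C) :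
      IsFolding ψ → IsFoldingSeq ρ → IsFoldingSeq (ρ.comp ψ)


open FreeGroup

set_option linter.unusedSectionVars false

variable {α : Type*} [DecidableEq α]

def Ok (a b : α × Bool) : Prop := ¬(a.1 = b.1 ∧ a.2 = !b.2)

theorem chain'_reduce (L : List (α × Bool)) : List.Chain' Ok (reduce L) := by
  induction L with
  | nil => exact List.isChain_nil
  | cons x t ih =>
    rw [FreeGroup.reduce.cons]
    rcases h : reduce t with _ | ⟨hd, tl⟩
    · exact List.isChain_singleton _
    · rw [h] at ih
      show List.Chain' Ok (if x.1 = hd.1 ∧ x.2 = !hd.2 then tl else x :: hd :: tl)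
      by_cases hc : x.1 = hd.1 ∧ x.2 = !hd.2
      · rw [if_pos hc]; exact ih.tail
      · rw [if_neg hc]; exact List.isChain_cons_cons.mpr ⟨hc, ih⟩

theorem reduce_eq_self_of_chain' {L : List (α × Bool)} (h : List.Chain' Ok L) :
    reduce L = L := by
  induction L with
  | nil => rfl
  | cons x t ih =>
    rw [FreeGroup.reduce.cons, ih h.tail]
    rcases t with _ | ⟨hd, tl⟩
    · rfl
    · show (if x.1 = hd.1 ∧ x.2 = !hd.2 then tl else x :: hd :: tl) = _
      rw [if_neg (List.isChain_cons_cons.mp h).1]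

theorem chain'_toWord (w : FreeGroup α) : List.Chain' Ok w.toWord := by
  have := chain'_reduce w.toWord
  rwa [FreeGroup.reduce_toWord] at this

theorem toWord_mk_of_chain' {L : List (α × Bool)} (h : List.Chain' Ok L) :
    (FreeGroup.mk L).toWord = L := by
  rw [FreeGroup.toWord_mk, reduce_eq_self_of_chain' h]

theorem toWord_mul_of_ok {u v : FreeGroup α}
    (h : ∀ a ∈ u.toWord.getLast?, ∀ b ∈ v.toWord.head?, Ok a b) :
    (u * v).toWord = u.toWord ++ v.toWord := by
  conv_lhs => rw [← FreeGroup.mk_toWord (x := u), ← FreeGroup.mk_toWord (x := v)]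
  rw [FreeGroup.mul_mk]
  exact toWord_mk_of_chain'
    (List.isChain_append.mpr ⟨chain'_toWord u, chain'_toWord v, h⟩)

theorem len_inv (w : FreeGroup α) : len w⁻¹ = len w := by
  simp [len, FreeGroup.toWord_inv, FreeGroup.invRev_length]

omit [DecidableEq α] in
theorem lett_eq_cond (x : α × Bool) :
    lett x = cond x.2 (FreeGroup.of x.1) (FreeGroup.of x.1)⁻¹ := by
  obtain ⟨a, b⟩ := x
  cases b
  · show FreeGroup.mk _ = (FreeGroup.of a)⁻¹
    rw [show FreeGroup.of a = FreeGroup.mk [(a, true)] from rfl, FreeGroup.inv_mk]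
    rfl
  · rfl

theorem toWord_lett (x : α × Bool) : (lett x).toWord = [x] := by
  simp [lett, FreeGroup.toWord_mk, FreeGroup.reduce_singleton]

omit [DecidableEq α] in
theorem lett_inv (x : α × Bool) : (lett x)⁻¹ = lett (x.1, !x.2) := by
  simp [lett, FreeGroup.inv_mk, FreeGroup.invRev]

omit [DecidableEq α] in
theorem map_lett {G : Type*} [Group G] (ψ : FreeGroup α →* G) (x : α × Bool) :
    ψ (lett x) = cond x.2 (ψ (FreeGroup.of x.1)) (ψ (FreeGroup.of x.1))⁻¹ := by
  rw [lett_eq_cond]; cases x.2 <;> simp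

omit [DecidableEq α] in
theorem head?_invRev (L : List (α × Bool)) :
    (FreeGroup.invRev L).head? = L.getLast?.map (fun a => (a.1, !a.2)) := by
  simp [FreeGroup.invRev, List.head?_reverse, List.getLast?_map]

omit [DecidableEq α] in
theorem getLast?_invRev (L : List (α × Bool)) :
    (FreeGroup.invRev L).getLast? = L.head?.map (fun a => (a.1, !a.2)) := by
  simp [FreeGroup.invRev, List.getLast?_reverse, List.head?_map]

theorem len_of_eq {X : Type} [DecidableEq X] {A : Type} (φ : FreeGroup A →* FreeGroup X)
    (x : A × Bool) : len (φ (FreeGroup.of x.1)) = len (φ (lett x)) := by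
  rw [map_lett]; cases x.2 <;> simp [len_inv]

theorem decomp_last {u : FreeGroup α} {ℓ : α × Bool} (h : u.toWord.getLast? = some ℓ) :
    u = FreeGroup.mk u.toWord.dropLast * lett ℓ ∧
    (FreeGroup.mk u.toWord.dropLast).toWord = u.toWord.dropLast ∧
    u.toWord.dropLast.length + 1 = len u := by
  obtain ⟨l', hl⟩ := List.getLast?_eq_some_iff.mp h
  have hc : List.Chain' Ok l' := by
    have := chain'_toWord u
    rw [hl] at this
    exact (List.isChain_append.mp this).1
  have hd : u.toWord.dropLast = l' := by rw [hl]; simp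
  refine ⟨?_, ?_, ?_⟩
  · conv_lhs => rw [← FreeGroup.mk_toWord (x := u)]
    rw [hd, hl, ← FreeGroup.mul_mk]; rfl
  · rw [hd]; exact toWord_mk_of_chain' hc
  · rw [hd, len, hl]; simp

theorem exists_common_last {u v : FreeGroup α}
    (h : len (u * v⁻¹) ≠ len u + len v) :
    ∃ ℓ, u.toWord.getLast? = some ℓ ∧ v.toWord.getLast? = some ℓ := by
  by_contra hc
  push_neg at hc
  apply h
  have hok : ∀ a ∈ u.toWord.getLast?, ∀ b ∈ (v⁻¹).toWord.head?, Ok a b := by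
    intro a ha b hb
    rw [FreeGroup.toWord_inv, head?_invRev] at hb
    obtain ⟨c, hc1, hc2⟩ := Option.map_eq_some_iff.mp hb
    rintro ⟨h1, h2⟩
    subst hc2
    simp only at h1 h2
    rw [Bool.not_not] at h2
    have : a = c := Prod.ext h1 h2
    subst this
    exact hc a ha hc1
  rw [len, toWord_mul_of_ok hok, List.length_append, FreeGroup.toWord_inv,
    FreeGroup.invRev_length]
  rfl

theorem fold_subdiv {X : Type} [DecidableEq X] {A : Type} [Finite A]
    (φ : FreeGroup A →* FreeGroup X) (p q : A × Bool) (hpq : q.1 ≠ p.1) (ℓ : X × Bool)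
    (hu : (φ (lett p)).toWord.getLast? = some ℓ)
    (hv : (φ (lett q)).toWord.getLast? = some ℓ) :
    ∃ (B : Type) (_ : Finite B) (ψ : FreeGroup A →* FreeGroup B)
      (φ₂ : FreeGroup B →* FreeGroup X),
      IsFolding ψ ∧ φ = φ₂.comp ψ ∧
      (∑ᶠ z : B, len (φ₂ (FreeGroup.of z))) < ∑ᶠ z : A, len (φ (FreeGroup.of z)) := by
  classical
  set u := φ (lett p) with hu_def
  set v := φ (lett q) with hv_def
  obtain ⟨hu1, hu2, hu3⟩ := decomp_last hu
  obtain ⟨hv1, hv2, hv3⟩ := decomp_last hv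
  set up : FreeGroup X := FreeGroup.mk u.toWord.dropLast with hup
  set vq : FreeGroup X := FreeGroup.mk v.toWord.dropLast with hvq
  set ψ : FreeGroup A →* FreeGroup (A ⊕ Unit) := FreeGroup.lift (fun z =>
    if z = p.1 then
      cond p.2 (lett (Sum.inl p.1, p.2) * FreeGroup.of (Sum.inr ()))
               (lett (Sum.inl p.1, p.2) * FreeGroup.of (Sum.inr ()))⁻¹
    else if z = q.1 then
      cond q.2 (lett (Sum.inl q.1, q.2) * FreeGroup.of (Sum.inr ()))
               (lett (Sum.inl q.1, q.2) * FreeGroup.of (Sum.inr ()))⁻¹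
    else FreeGroup.of (Sum.inl z)) with hψ
  set φ₂ : FreeGroup (A ⊕ Unit) →* FreeGroup X := FreeGroup.lift (fun s =>
    Sum.casesOn s (fun z =>
      if z = p.1 then cond p.2 up up⁻¹
      else if z = q.1 then cond q.2 vq vq⁻¹
      else φ (FreeGroup.of z)) (fun _ => lett ℓ)) with hφ₂
  have hψp : ψ (lett p) = lett (Sum.inl p.1, p.2) * FreeGroup.of (Sum.inr ()) := by
    rw [map_lett, hψ, FreeGroup.lift_apply_of, if_pos rfl]
    cases hb : p.2 <;> simp [hb]
  have hψq : ψ (lett q) = lett (Sum.inl q.1, q.2) * FreeGroup.of (Sum.inr ()) := by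
    rw [map_lett, hψ, FreeGroup.lift_apply_of, if_neg hpq, if_pos rfl]
    cases hb : q.2 <;> simp [hb]
  have hψz : ∀ z : A, z ≠ p.1 → z ≠ q.1 → ψ (FreeGroup.of z) = FreeGroup.of (Sum.inl z) := by
    intro z h1 h2
    rw [hψ, FreeGroup.lift_apply_of, if_neg h1, if_neg h2]
  have hφ₂p : φ₂ (FreeGroup.of (Sum.inl p.1)) = cond p.2 up up⁻¹ := by
    rw [hφ₂, FreeGroup.lift_apply_of]; simp
  have hφ₂q : φ₂ (FreeGroup.of (Sum.inl q.1)) = cond q.2 vq vq⁻¹ := by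
    rw [hφ₂, FreeGroup.lift_apply_of]; simp [hpq]
  have hφ₂t : φ₂ (FreeGroup.of (Sum.inr ())) = lett ℓ := by
    rw [hφ₂, FreeGroup.lift_apply_of]
  have hφ₂lp : φ₂ (lett (Sum.inl p.1, p.2)) = up := by
    rw [map_lett]; simp only [hφ₂p]; cases p.2 <;> simp
  have hφ₂lq : φ₂ (lett (Sum.inl q.1, q.2)) = vq := by
    rw [map_lett]; simp only [hφ₂q]; cases q.2 <;> simp
  refine ⟨A ⊕ Unit, inferInstance, ψ, φ₂, ?_, ?_, ?_⟩
  · exact IsFolding.subdiv p q hpq ψ hψp hψq hψz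
  · apply FreeGroup.ext_hom
    intro z
    rw [MonoidHom.comp_apply]
    by_cases h1 : z = p.1
    · rw [h1]
      have hofp : φ (FreeGroup.of p.1) = cond p.2 u u⁻¹ := by
        rw [hu_def, map_lett]; cases p.2 <;> simp
      have hpsi : ψ (FreeGroup.of p.1) = cond p.2 (ψ (lett p)) (ψ (lett p))⁻¹ := by
        rw [map_lett (ψ := ψ) (x := p)]; cases p.2 <;> simp
      rw [hpsi, hofp]
      cases p.2 <;>
        simp [hψp, hφ₂lp, hφ₂t, hu1]
    · by_cases h2 : z = q.1
      · rw [h2]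
        have hofq : φ (FreeGroup.of q.1) = cond q.2 v v⁻¹ := by
          rw [hv_def, map_lett]; cases q.2 <;> simp
        have hpsi : ψ (FreeGroup.of q.1) = cond q.2 (ψ (lett q)) (ψ (lett q))⁻¹ := by
          rw [map_lett (ψ := ψ) (x := q)]; cases q.2 <;> simp
        rw [hpsi, hofq]
        cases q.2 <;>
          simp [hψq, hφ₂lq, hφ₂t, hv1]
      · rw [hψz z h1 h2, hφ₂, FreeGroup.lift_apply_of]
        simp [h1, h2]
  · haveI : Fintype A := Fintype.ofFinite A
    rw [finsum_eq_sum_of_fintype, finsum_eq_sum_of_fintype, Fintype.sum_sum_type]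
    have hunit : ∑ b : Unit, len (φ₂ (FreeGroup.of (Sum.inr b))) = 1 := by
      simp [hφ₂t, len, toWord_lett]
    rw [hunit]
    have hlp : len (φ₂ (FreeGroup.of (Sum.inl p.1))) + 1 = len (φ (FreeGroup.of p.1)) := by
      rw [hφ₂p, len_of_eq φ p, ← hu_def, ← hu3]
      cases p.2 <;> simp [len_inv, len, hu2]
    have hlq : len (φ₂ (FreeGroup.of (Sum.inl q.1))) + 1 = len (φ (FreeGroup.of q.1)) := by
      rw [hφ₂q, len_of_eq φ q, ← hv_def, ← hv3]
      cases q.2 <;> simp [len_inv, len, hv2]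
    have hrest : ∀ z : A, len (φ (FreeGroup.of z)) = len (φ₂ (FreeGroup.of (Sum.inl z)))
        + ((if z = p.1 then 1 else 0) + (if z = q.1 then 1 else 0)) := by
      intro z
      by_cases h1 : z = p.1
      · subst h1
        rw [if_pos rfl, if_neg (fun h => hpq h.symm)]
        omega
      · by_cases h2 : z = q.1
        · subst h2
          rw [if_neg h1, if_pos rfl]
          omega
        · have : φ₂ (FreeGroup.of (Sum.inl z)) = φ (FreeGroup.of z) := by
            rw [hφ₂, FreeGroup.lift_apply_of]; simp [h1, h2]
          rw [this, if_neg h1, if_neg h2]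
          simp
    calc (∑ a : A, len (φ₂ (FreeGroup.of (Sum.inl a)))) + 1
        < (∑ a : A, len (φ₂ (FreeGroup.of (Sum.inl a)))) + 2 := by omega
      _ = ∑ a : A, len (φ (FreeGroup.of a)) := by
          rw [Finset.sum_congr rfl (fun a _ => hrest a), Finset.sum_add_distrib,
            Finset.sum_add_distrib, Fintype.sum_ite_eq' p.1 (fun _ => 1),
            Fintype.sum_ite_eq' q.1 (fun _ => 1)]

theorem fold_subdivInv {X : Type} [DecidableEq X] {A : Type} [Finite A]
    (φ : FreeGroup A →* FreeGroup X) (p : A × Bool) (ℓ : X × Bool)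
    (hu : (φ (lett p)).toWord.getLast? = some ℓ)
    (hh : (φ (lett p)).toWord.head? = some (ℓ.1, !ℓ.2)) :
    ∃ (B : Type) (_ : Finite B) (ψ : FreeGroup A →* FreeGroup B)
      (φ₂ : FreeGroup B →* FreeGroup X),
      IsFolding ψ ∧ φ = φ₂.comp ψ ∧
      (∑ᶠ z : B, len (φ₂ (FreeGroup.of z))) < ∑ᶠ z : A, len (φ (FreeGroup.of z)) := by
  classical
  set u := φ (lett p) with hu_def
  obtain ⟨Y, hY⟩ := List.getLast?_eq_some_iff.mp hu
  rcases Y with _ | ⟨c, M⟩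
  · rw [hY] at hh
    simp only [List.nil_append, List.head?_cons, Option.some.injEq] at hh
    have := congrArg Prod.snd hh
    simp at this
  have hc : c = (ℓ.1, !ℓ.2) := by
    rw [hY] at hh
    simpa using hh
  subst hc
  have hchain : List.Chain' Ok M := by
    have := chain'_toWord u
    rw [hY] at this
    exact (List.isChain_append.mp this.tail).1
  set m : FreeGroup X := FreeGroup.mk M with hm_def
  have hm : m.toWord = M := toWord_mk_of_chain' hchain
  have hu1 : u = (lett ℓ)⁻¹ * m * lett ℓ := by
    conv_lhs => rw [← FreeGroup.mk_toWord (x := u), hY]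
    rw [lett_inv]
    show FreeGroup.mk (((ℓ.1, !ℓ.2) :: M) ++ [ℓ]) = _
    rw [show ((ℓ.1, !ℓ.2) :: M) ++ [ℓ] = [(ℓ.1, !ℓ.2)] ++ (M ++ [ℓ]) from by simp,
      ← FreeGroup.mul_mk, ← FreeGroup.mul_mk]
    rw [mul_assoc]
    rfl
  have hlenu : len u = M.length + 2 := by
    rw [len, hY]; simp
  set t : FreeGroup (A ⊕ Unit) := FreeGroup.of (Sum.inr ()) with ht_def
  set ψ : FreeGroup A →* FreeGroup (A ⊕ Unit) := FreeGroup.lift (fun z =>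
    if z = p.1 then t⁻¹ * FreeGroup.of (Sum.inl p.1) * t
    else FreeGroup.of (Sum.inl z)) with hψ
  set φ₂ : FreeGroup (A ⊕ Unit) →* FreeGroup X := FreeGroup.lift (fun s =>
    Sum.casesOn s (fun z => if z = p.1 then cond p.2 m m⁻¹ else φ (FreeGroup.of z))
      (fun _ => lett ℓ)) with hφ₂
  have hψof : ψ (FreeGroup.of p.1) = t⁻¹ * FreeGroup.of (Sum.inl p.1) * t := by
    rw [hψ, FreeGroup.lift_apply_of, if_pos rfl]
  have hψp : ψ (lett p) = t⁻¹ * lett (Sum.inl p.1, p.2) * t := by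
    rw [map_lett, hψof]
    cases p.2 <;> simp [lett_eq_cond, mul_assoc]
  have hψz : ∀ z : A, z ≠ p.1 → ψ (FreeGroup.of z) = FreeGroup.of (Sum.inl z) := by
    intro z h1
    rw [hψ, FreeGroup.lift_apply_of, if_neg h1]
  have hφ₂p : φ₂ (FreeGroup.of (Sum.inl p.1)) = cond p.2 m m⁻¹ := by
    rw [hφ₂, FreeGroup.lift_apply_of]; simp
  have hφ₂t : φ₂ t = lett ℓ := by
    rw [ht_def, hφ₂, FreeGroup.lift_apply_of]
  refine ⟨A ⊕ Unit, inferInstance, ψ, φ₂, ?_, ?_, ?_⟩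
  · exact IsFolding.subdivInv p ψ hψp hψz
  · apply FreeGroup.ext_hom
    intro z
    rw [MonoidHom.comp_apply]
    by_cases h1 : z = p.1
    · rw [h1]
      have hofp : φ (FreeGroup.of p.1) = cond p.2 u u⁻¹ := by
        rw [hu_def, map_lett]; cases p.2 <;> simp
      rw [hψof, hofp]
      cases hb : p.2 <;>
        simp [hφ₂p, hφ₂t, hu1, mul_assoc, hb]
    · rw [hψz z h1, hφ₂, FreeGroup.lift_apply_of]
      simp [h1]
  · haveI : Fintype A := Fintype.ofFinite A
    rw [finsum_eq_sum_of_fintype, finsum_eq_sum_of_fintype, Fintype.sum_sum_type]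
    have hunit : ∑ b : Unit, len (φ₂ (FreeGroup.of (Sum.inr b))) = 1 := by
      simp only [Finset.univ_unique, Finset.sum_singleton]
      have : (default : Unit) = () := rfl
      rw [this, ← ht_def, hφ₂t, len, toWord_lett]
      rfl
    rw [hunit]
    have hlp : len (φ₂ (FreeGroup.of (Sum.inl p.1))) + 2 = len (φ (FreeGroup.of p.1)) := by
      rw [hφ₂p, len_of_eq φ p, ← hu_def, hlenu]
      cases p.2 <;> simp [len_inv, len, hm]
    have hrest : ∀ z : A, len (φ (FreeGroup.of z)) = len (φ₂ (FreeGroup.of (Sum.inl z)))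
        + (if z = p.1 then 2 else 0) := by
      intro z
      by_cases h1 : z = p.1
      · rw [h1, if_pos rfl]; omega
      · have : φ₂ (FreeGroup.of (Sum.inl z)) = φ (FreeGroup.of z) := by
          rw [hφ₂, FreeGroup.lift_apply_of]; simp [h1]
        rw [this, if_neg h1]
        simp
    calc (∑ a : A, len (φ₂ (FreeGroup.of (Sum.inl a)))) + 1
        < (∑ a : A, len (φ₂ (FreeGroup.of (Sum.inl a)))) + 2 := by omega
      _ = ∑ a : A, len (φ (FreeGroup.of a)) := by
          rw [Finset.sum_congr rfl (fun a _ => hrest a), Finset.sum_add_distrib,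
            Fintype.sum_ite_eq' p.1 (fun _ => 2)]

theorem fold_step {X : Type} [DecidableEq X] {A : Type} [Finite A]
    (φ : FreeGroup A →* FreeGroup X) (p q : A × Bool) (hpq : p ≠ q)
    (hne : len (φ (lett p) * (φ (lett q))⁻¹) ≠ len (φ (lett p)) + len (φ (lett q))) :
    ∃ (B : Type) (_ : Finite B) (ψ : FreeGroup A →* FreeGroup B)
      (φ₂ : FreeGroup B →* FreeGroup X),
      IsFolding ψ ∧ φ = φ₂.comp ψ ∧
      (∑ᶠ z : B, len (φ₂ (FreeGroup.of z))) < ∑ᶠ z : A, len (φ (FreeGroup.of z)) := by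
  obtain ⟨ℓ, hu, hv⟩ := exists_common_last hne
  by_cases hc : p.1 = q.1
  · have hb : q.2 = !p.2 := by
      rcases p with ⟨p1, pb⟩; rcases q with ⟨q1, qb⟩
      simp only at hc
      subst hc
      cases pb <;> cases qb <;> simp_all
    have hq : lett q = (lett p)⁻¹ := by
      rw [lett_inv]
      congr 1
      exact Prod.ext hc.symm hb
    have hq2 : φ (lett q) = (φ (lett p))⁻¹ := by rw [hq]; exact map_inv φ (lett p)
    rw [hq2, FreeGroup.toWord_inv, getLast?_invRev] at hv
    obtain ⟨c, hc1, hc2⟩ := Option.map_eq_some_iff.mp hv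
    have hc2' : (c.1, !c.2) = ℓ := hc2
    have hcc : c = (ℓ.1, !ℓ.2) := by
      rw [← hc2']
      simp
    exact fold_subdivInv φ p ℓ hu (hcc ▸ hc1)
  · exact fold_subdiv φ p q (fun h => hc h.symm) ℓ hu hv

theorem main_ind {X : Type} [DecidableEq X] :
    ∀ (n : ℕ) (A : Type), Finite A → ∀ (φ : FreeGroup A →* FreeGroup X),
      (∑ᶠ z : A, len (φ (FreeGroup.of z))) ≤ n →
      ∃ (Z : Type) (_ : Finite Z) (ψ : FreeGroup A →* FreeGroup Z)
        (φ' : FreeGroup Z →* FreeGroup X),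
        IsFoldingSeq ψ ∧ φ = φ'.comp ψ ∧
        ∀ p q : Z × Bool, p ≠ q →
          len (φ' (lett p) * (φ' (lett q))⁻¹) = len (φ' (lett p)) + len (φ' (lett q)) := by
  intro n
  induction n with
  | zero =>
    intro A hA φ hn
    haveI := hA
    by_cases h : ∀ p q : A × Bool, p ≠ q →
        len (φ (lett p) * (φ (lett q))⁻¹) = len (φ (lett p)) + len (φ (lett q))
    · exact ⟨A, hA, MonoidHom.id _, φ, IsFoldingSeq.refl, (MonoidHom.comp_id φ).symm, h⟩
    · push_neg at h
      obtain ⟨p, q, hpq, hne⟩ := h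
      obtain ⟨B, hB, ψ₁, φ₂, _, _, hlt⟩ := fold_step φ p q hpq hne
      omega
  | succ n ih =>
    intro A hA φ hn
    haveI := hA
    by_cases h : ∀ p q : A × Bool, p ≠ q →
        len (φ (lett p) * (φ (lett q))⁻¹) = len (φ (lett p)) + len (φ (lett q))
    · exact ⟨A, hA, MonoidHom.id _, φ, IsFoldingSeq.refl, (MonoidHom.comp_id φ).symm, h⟩
    · push_neg at h
      obtain ⟨p, q, hpq, hne⟩ := h
      obtain ⟨B, hB, ψ₁, φ₂, hfold, hcomp, hlt⟩ := fold_step φ p q hpq hne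
      obtain ⟨Z, hZ, ψ₂, φ', hseq, hcomp2, hgood⟩ := ih B hB φ₂ (by omega)
      exact ⟨Z, hZ, ψ₂.comp ψ₁, φ', IsFoldingSeq.step ψ₁ ψ₂ hfold hseq,
        by rw [hcomp, hcomp2, MonoidHom.comp_assoc], hgood⟩

theorem stmt_14 (Y X : Type) [Finite Y] [DecidableEq X]
    (φ : FreeGroup Y →* FreeGroup X) (hφ : ∀ y : Y, φ (FreeGroup.of y) ≠ 1) :
    ∃ (Z : Type) (_ : Finite Z) (ψ : FreeGroup Y →* FreeGroup Z)
      (φ' : FreeGroup Z →* FreeGroup X),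
      IsFoldingSeq ψ ∧ φ = φ'.comp ψ ∧
      ∀ p q : Z × Bool, p ≠ q →
        len (φ' (lett p) * (φ' (lett q))⁻¹) = len (φ' (lett p)) + len (φ' (lett q)) := by
  exact main_ind (∑ᶠ z : Y, len (φ (FreeGroup.of z))) Y ‹_› φ le_rfl
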